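/- For d ≥ 1, let φ_k (1 ≤ k ≤ d) denote the elementary symmetric polynomials in the variables z₁,…,z_d (so φ₁ = z₁ + ⋯ + z_d, φ₂ = Σ_{i<j} z_i z_j, …, φ_d = z₁ z₂ ⋯ z_d), and let Φ = (φ₁,…,φ_d). Then Φ is an open map on ℂ^d; furthermore, if Ω is a bounded domain in ℂ^d invariant under all permutations of the coordinates, then Φ(Ω) is open and Φ : Ω → Φ(Ω) is a holomorphic proper map. -/

import Mathlib

open MeasureTheory Metric Set
open scoped ENNReal

noncomputable section

/-- Membership in the Bergman space `L²ₐ(Ω)` of a set `Ω ⊆ ℂᵈ`, as a function: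
holomorphic on `Ω` and square integrable with respect to Lebesgue measure on `Ω`. -/
def BergmanMem {d : ℕ} (Ω : Set (Fin d → ℂ)) (f : (Fin d → ℂ) → ℂ) : Prop :=
  AnalyticOnNhd ℂ f Ω ∧ MemLp f 2 (volume.restrict Ω)

/-- `E` is `L²ₐ`-removable in `Ω`: every function of the Bergman space of `Ω - E` extends
analytically to a function of the Bergman space of `Ω`. -/
def IsL2aRemovable {d : ℕ} (Ω E : Set (Fin d → ℂ)) : Prop :=
  ∀ f : (Fin d → ℂ) → ℂ, BergmanMem (Ω \ E) f →
    ∃ g : (Fin d → ℂ) → ℂ, BergmanMem Ω g ∧ EqOn g f (Ω \ E)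

/-- `A` is locally `L²ₐ`-removable in `Ω`: near every point of `Ω` there are arbitrarily small
open domains `U` in which `U ∩ A` is `L²ₐ`-removable. -/
def IsLocallyL2aRemovableIn {d : ℕ} (Ω A : Set (Fin d → ℂ)) : Prop :=
  ∀ lam ∈ Ω, ∀ ε > (0 : ℝ), ∃ U : Set (Fin d → ℂ),
    IsOpen U ∧ IsConnected U ∧ lam ∈ U ∧ U ⊆ ball lam ε ∧ IsL2aRemovable U (U ∩ A)

/-- A subset `J` of `ℂᵈ` is locally `L²ₐ`-removable: each point of `ℂᵈ` has a domain around it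
in which `J` is locally `L²ₐ`-removable. -/
def IsLocallyL2aRemovable {d : ℕ} (J : Set (Fin d → ℂ)) : Prop :=
  ∀ lam : Fin d → ℂ, ∃ Ω : Set (Fin d → ℂ), IsOpen Ω ∧ IsConnected Ω ∧ lam ∈ Ω ∧
    IsLocallyL2aRemovableIn Ω (J ∩ Ω)

/-- `E` is a zero variety of `Ω`: the zero set of a nonconstant holomorphic function on `Ω`. -/
def IsZeroVariety {d : ℕ} (Ω E : Set (Fin d → ℂ)) : Prop :=
  ∃ f : (Fin d → ℂ) → ℂ, AnalyticOnNhd ℂ f Ω ∧ (¬ ∃ c : ℂ, EqOn f (fun _ => c) Ω) ∧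
    E = {z ∈ Ω | f z = 0}

/-- `E` is a good zero variety of `Ω`: a zero variety such that near each point of the closure
of `Ω`, the closure of `E` is cut out of `closure Ω` by a locally defined holomorphic function. -/
def IsGoodZeroVariety {d : ℕ} (Ω E : Set (Fin d → ℂ)) : Prop :=
  IsZeroVariety Ω E ∧ ∀ lam ∈ closure Ω, ∃ r > (0 : ℝ), ∃ h : (Fin d → ℂ) → ℂ,
    AnalyticOnNhd ℂ h (ball lam r) ∧
    ball lam r ∩ closure E = {z ∈ ball lam r ∩ closure Ω | h z = 0}

/-- `F` is a holomorphic proper map on `Ω`: `F` is holomorphic on `Ω`, its image `F(Ω)` is open,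
and `F : Ω → F(Ω)` is proper, i.e. preimages (within `Ω`) of compact subsets of `F(Ω)` are
compact. -/
def IsHolomorphicProperMapOn {d : ℕ} (F : (Fin d → ℂ) → Fin d → ℂ) (Ω : Set (Fin d → ℂ)) :
    Prop :=
  AnalyticOnNhd ℂ F Ω ∧ IsOpen (F '' Ω) ∧
    ∀ K : Set (Fin d → ℂ), K ⊆ F '' Ω → IsCompact K → IsCompact {z ∈ Ω | F z ∈ K}

open Finset Polynomial in
section
open Finset Polynomial

namespace EsymmAux

variable {d : ℕ}

/-- The multiset of coordinates of a tuple. -/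
def M {α : Type*} {n : ℕ} (z : Fin n → α) : Multiset α := Multiset.map z Finset.univ.val

lemma card_M {α : Type*} {n : ℕ} (z : Fin n → α) : Multiset.card (M z) = n := by
  simp [M]

lemma M_comp_equiv {α : Type*} {m n : ℕ} (e : Fin m ≃ Fin n) (f : Fin n → α) :
    M (fun i => f (e i)) = M f := by
  have h := congrArg Finset.val (Finset.map_univ_equiv e)
  rw [Finset.map_val] at h
  calc Multiset.map (fun i => f (e i)) Finset.univ.val
      = Multiset.map f (Multiset.map e Finset.univ.val) := by
        rw [Multiset.map_map]; rfl
    _ = Multiset.map f Finset.univ.val := by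
        rw [show (⇑e : Fin m → Fin n) = ⇑e.toEmbedding from rfl, h]

/-- The map under study. -/
noncomputable def Phi (z : Fin d → ℂ) (k : Fin d) : ℂ :=
  MvPolynomial.eval z (MvPolynomial.esymm (Fin d) ℂ ((k : ℕ) + 1))

lemma eval_esymm (z : Fin d → ℂ) (n : ℕ) :
    MvPolynomial.eval z (MvPolynomial.esymm (Fin d) ℂ n) = (M z).esymm n := by
  rw [M, Finset.esymm_map_val, MvPolynomial.esymm]
  simp [MvPolynomial.eval_prod]

lemma Phi_eq (z : Fin d → ℂ) (k : Fin d) : Phi z k = (M z).esymm ((k : ℕ) + 1) :=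
  eval_esymm z _

lemma Phi_eq_of_M_eq {z w : Fin d → ℂ} (h : M z = M w) : Phi z = Phi w := by
  funext k; rw [Phi_eq, Phi_eq, h]


lemma multiset_eq_of_esymm_eq {s t : Multiset ℂ} (hs : Multiset.card s = d)
    (ht : Multiset.card t = d) (h : ∀ n, 1 ≤ n → n ≤ d → s.esymm n = t.esymm n) : s = t := by
  have hP : (s.map fun a => X - C a).prod = (t.map fun a => X - C a).prod := by
    ext k
    by_cases hk : k ≤ d
    · rw [Multiset.prod_X_sub_C_coeff s (by omega), Multiset.prod_X_sub_C_coeff t (by omega),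
        hs, ht]
      rcases Nat.eq_or_lt_of_le hk with rfl | hk'
      · simp [Multiset.esymm]
      · rw [h (d - k) (by omega) (by omega)]
    · rw [Polynomial.coeff_eq_zero_of_natDegree_lt, Polynomial.coeff_eq_zero_of_natDegree_lt]
      · rw [Polynomial.natDegree_multiset_prod_X_sub_C_eq_card, ht]; omega
      · rw [Polynomial.natDegree_multiset_prod_X_sub_C_eq_card, hs]; omega
  have := congrArg Polynomial.roots hP
  rwa [Polynomial.roots_multiset_prod_X_sub_C, Polynomial.roots_multiset_prod_X_sub_C] at this

lemma M_eq_of_Phi_eq {z w : Fin d → ℂ} (h : Phi z = Phi w) : M z = M w := by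
  refine multiset_eq_of_esymm_eq (card_M z) (card_M w) (fun n h1 hn => ?_)
  have := congrFun h ⟨n - 1, by omega⟩
  rw [Phi_eq, Phi_eq] at this
  simpa [Nat.sub_add_cancel h1] using this

lemma exists_perm_of_M_eq : ∀ {n : ℕ} (z w : Fin n → ℂ), M z = M w →
    ∃ σ : Equiv.Perm (Fin n), ∀ i, z i = w (σ i) := by
  intro n
  induction n with
  | zero => exact fun z w _ => ⟨1, fun i => i.elim0⟩
  | succ n ih =>
    intro z w h
    have h0 : z 0 ∈ M w := by
      rw [← h]
      exact Multiset.mem_map_of_mem z (Finset.mem_univ_val 0)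
    obtain ⟨j, -, hj⟩ := Multiset.mem_map.1 h0
    set w' : Fin (n+1) → ℂ := fun i => w (Equiv.swap 0 j i) with hw'
    have hMw' : M w' = M w := M_comp_equiv (Equiv.swap 0 j) w
    have hM : M z = M w' := h.trans hMw'.symm
    have hdec : ∀ u : Fin (n+1) → ℂ, M u = u 0 ::ₘ M (u ∘ Fin.succ) := by
      intro u
      rw [M, M, Fin.univ_val_map, Fin.univ_val_map, List.ofFn_succ]
      simp [Function.comp_def]
    rw [hdec z, hdec w'] at hM
    have hz0 : z 0 = w' 0 := by simp [hw', hj]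
    rw [hz0] at hM
    have hM' : M (z ∘ Fin.succ) = M (w' ∘ Fin.succ) := by
      exact (Multiset.cons_inj_right _).1 hM
    obtain ⟨σ', hσ'⟩ := ih _ _ hM'
    refine ⟨Equiv.Perm.decomposeFin.symm (j, σ'), fun i => ?_⟩
    refine Fin.cases ?_ (fun x => ?_) i
    · rw [Equiv.Perm.decomposeFin_symm_apply_zero]
      exact hz0.trans (by simp [hw'])
    · rw [Equiv.Perm.decomposeFin_symm_apply_succ]
      exact hσ' x

lemma exists_M_eq (s : Multiset ℂ) (h : Multiset.card s = d) :
    ∃ w : Fin d → ℂ, M w = s := by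
  have hl : s.toList.length = d := by rw [Multiset.length_toList, h]
  refine ⟨fun i => s.toList.get (finCongr hl.symm i), ?_⟩
  rw [M_comp_equiv (finCongr hl.symm) s.toList.get, M, Fin.univ_val_map, List.ofFn_get,
    Multiset.coe_toList]


lemma phi_surjective (hd : 1 ≤ d) (c : Fin d → ℂ) : ∃ w : Fin d → ℂ, Phi w = c := by
  classical
  set c' : ℕ → ℂ := fun m => if h : m < d then c ⟨m, h⟩ else 0 with hc'
  set a : ℕ → ℂ := fun k => (-1 : ℂ) ^ (d - k) * c' (d - k - 1) with ha
  set q : Polynomial ℂ := X ^ d + ∑ k ∈ Finset.range d, C (a k) * X ^ k with hq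
  have hsum : (∑ k ∈ Finset.range d, C (a k) * X ^ k).degree < (X ^ d : Polynomial ℂ).degree := by
    rw [Polynomial.degree_X_pow]
    apply lt_of_le_of_lt (Polynomial.degree_sum_le _ _)
    rw [Finset.sup_lt_iff (show (⊥ : WithBot ℕ) < (d : ℕ) by exact_mod_cast WithBot.bot_lt_coe d)]
    intro k hk
    refine lt_of_le_of_lt (Polynomial.degree_C_mul_X_pow_le _ _) ?_
    exact_mod_cast Finset.mem_range.1 hk
  have hqm : q.Monic := by
    apply Polynomial.monic_X_pow_add
    exact lt_of_lt_of_le hsum (le_of_eq (Polynomial.degree_X_pow d))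
  have hqdeg : q.degree = d := by
    rw [hq, Polynomial.degree_add_eq_left_of_degree_lt hsum, Polynomial.degree_X_pow]
  have hqnat : q.natDegree = d := Polynomial.natDegree_eq_of_degree_eq_some hqdeg
  have hcard : Multiset.card q.roots = d := by
    rw [← hqnat]
    exact (Polynomial.splits_iff_card_roots).1 (IsAlgClosed.splits q)
  have hprod : (q.roots.map fun r => X - C r).prod = q := by
    have := Polynomial.C_leadingCoeff_mul_prod_multiset_X_sub_C (p := q) (hqnat ▸ hcard)
    rwa [hqm.leadingCoeff, map_one, one_mul] at this
  have hesymm : ∀ n, 1 ≤ n → n ≤ d → q.roots.esymm n = c' (n - 1) := by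
    intro n h1 hn
    have hc1 : q.coeff (d - n) = (-1 : ℂ) ^ n * q.roots.esymm n := by
      conv_lhs => rw [← hprod]
      rw [Multiset.prod_X_sub_C_coeff q.roots (le_trans (by omega) hcard.ge), hcard,
        show d - (d - n) = n by omega]
    have hc2 : q.coeff (d - n) = (-1 : ℂ) ^ n * c' (n - 1) := by
      rw [hq, Polynomial.coeff_add, Polynomial.coeff_X_pow, if_neg (by omega),
        Polynomial.finset_sum_coeff]
      simp only [Polynomial.coeff_C_mul, Polynomial.coeff_X_pow]
      rw [Finset.sum_eq_single (d - n)]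
      · rw [if_pos rfl, mul_one, zero_add]
        show (-1 : ℂ) ^ (d - (d - n)) * c' (d - (d - n) - 1) = (-1 : ℂ) ^ n * c' (n - 1)
        rw [show d - (d - n) = n from by omega]
      · intro b _ hb
        rw [if_neg (fun hh => hb hh.symm), mul_zero]
      · intro hmem
        exact absurd (Finset.mem_range.2 (by omega)) hmem
    have := hc1.symm.trans hc2
    exact mul_left_cancel₀ (pow_ne_zero _ (neg_ne_zero.2 one_ne_zero)) this
  obtain ⟨w, hw⟩ := exists_M_eq q.roots hcard
  refine ⟨w, funext fun k => ?_⟩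
  rw [Phi_eq, hw, hesymm ((k : ℕ) + 1) (by omega) (by omega)]
  simp [hc']


lemma norm_le_of_Phi (w : Fin d → ℂ) (i : Fin d) : ‖w i‖ ≤ ‖Phi w‖ + 1 := by
  classical
  set P : Polynomial ℂ := ((M w).map fun a => X - C a).prod with hP
  have hmonic : P.Monic :=
    Polynomial.monic_multiset_prod_of_monic _ _ (fun a _ => Polynomial.monic_X_sub_C a)
  have hnat : P.natDegree = d := by
    rw [hP, Polynomial.natDegree_multiset_prod_X_sub_C_eq_card, card_M]
  have hmem : w i ∈ P.roots := by
    rw [hP, Polynomial.roots_multiset_prod_X_sub_C]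
    exact Multiset.mem_map_of_mem w (Finset.mem_univ_val i)
  have hlt :=
    Polynomial.IsRoot.norm_lt_cauchyBound hmonic.ne_zero (Polynomial.isRoot_of_mem_roots hmem)
  have hsup : (Finset.range P.natDegree).sup (fun k => ‖P.coeff k‖₊) ≤ ‖Phi w‖₊ := by
    refine Finset.sup_le fun k hk => ?_
    rw [Finset.mem_range, hnat] at hk
    have hco : P.coeff k = (-1 : ℂ) ^ (d - k) * (M w).esymm (d - k) := by
      rw [hP, Multiset.prod_X_sub_C_coeff (M w) (le_trans (by omega) (card_M w).ge), card_M]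
    have he : (M w).esymm (d - k) = Phi w ⟨d - k - 1, by omega⟩ := by
      rw [Phi_eq]
      congr 1
      show d - k = d - k - 1 + 1
      omega
    have : ‖P.coeff k‖₊ = ‖Phi w ⟨d - k - 1, by omega⟩‖₊ := by
      rw [hco, he, nnnorm_mul, nnnorm_pow, nnnorm_neg, nnnorm_one, one_pow, one_mul]
    rw [this]
    exact nnnorm_le_pi_nnnorm _ _
  have h2 : Polynomial.cauchyBound P
      = (Finset.range P.natDegree).sup (fun k => ‖P.coeff k‖₊) + 1 := by
    rw [Polynomial.cauchyBound, hmonic.leadingCoeff, nnnorm_one, div_one]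
  have h3 : ‖w i‖₊ ≤ ‖Phi w‖₊ + 1 := le_trans hlt.le (by rw [h2]; exact add_le_add_left hsup 1)
  exact_mod_cast h3

lemma analyticOnNhd_eval (p : MvPolynomial (Fin d) ℂ) :
    AnalyticOnNhd ℂ (fun z : Fin d → ℂ => MvPolynomial.eval z p) Set.univ := by
  induction p using MvPolynomial.induction_on with
  | C a => simpa using analyticOnNhd_const (v := a)
  | add p q hp hq => simp only [map_add]; exact hp.add hq
  | mul_X p i hp =>
    simp only [map_mul, MvPolynomial.eval_X]
    exact hp.mul ((ContinuousLinearMap.proj i : (Fin d → ℂ) →L[ℂ] ℂ).analyticOnNhd Set.univ)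

lemma analyticOnNhd_Phi (s : Set (Fin d → ℂ)) : AnalyticOnNhd ℂ (Phi (d := d)) s := by
  have h : AnalyticOnNhd ℂ (fun z (k : Fin d) =>
      MvPolynomial.eval z (MvPolynomial.esymm (Fin d) ℂ ((k : ℕ) + 1))) s :=
    AnalyticOnNhd.pi
      (f := fun (k : Fin d) (z : Fin d → ℂ) =>
        MvPolynomial.eval z (MvPolynomial.esymm (Fin d) ℂ ((k : ℕ) + 1)))
      fun k => (analyticOnNhd_eval _).mono (Set.subset_univ s)
  exact h

lemma continuous_Phi : Continuous (Phi (d := d)) := by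
  rw [← continuousOn_univ]
  exact (analyticOnNhd_Phi Set.univ).continuousOn


theorem isOpenMap_Phi (hd : 1 ≤ d) : IsOpenMap (Phi (d := d)) := by
  intro U hU
  rw [isOpen_iff_mem_nhds]
  rintro _ ⟨z, hzU, rfl⟩
  set V : Set (Fin d → ℂ) := {v | ∃ σ : Equiv.Perm (Fin d), (fun i => v (σ i)) ∈ U} with hV
  have hVopen : IsOpen V := by
    have hVU : V = ⋃ σ : Equiv.Perm (Fin d), (fun v (i : Fin d) => v (σ i)) ⁻¹' U := by
      ext v
      simp [hV, Set.mem_iUnion, Set.mem_preimage]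
    rw [hVU]
    exact isOpen_iUnion fun σ => hU.preimage (continuous_pi fun i => continuous_apply (σ i))
  have himg : Phi '' V = Phi '' U := by
    apply Set.Subset.antisymm
    · rintro _ ⟨v, ⟨σ, hσ⟩, rfl⟩
      exact ⟨fun i => v (σ i), hσ, Phi_eq_of_M_eq (M_comp_equiv σ v)⟩
    · exact Set.image_mono fun v hv => ⟨1, by simpa using hv⟩
  rw [← himg]
  by_contra hcon
  rw [Metric.mem_nhds_iff] at hcon
  push_neg at hcon
  have hseq : ∀ n : ℕ, ∃ cc, dist cc (Phi z) < 1 / (n + 1) ∧ cc ∉ Phi '' V := by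
    intro n
    obtain ⟨cc, hc1, hc2⟩ := Set.not_subset.1 (hcon (1 / (n + 1)) (by positivity))
    exact ⟨cc, by simpa [Metric.mem_ball] using hc1, hc2⟩
  choose c hc1 hc2 using hseq
  have hctend : Filter.Tendsto c Filter.atTop (nhds (Phi z)) := by
    rw [tendsto_iff_dist_tendsto_zero]
    exact squeeze_zero (fun n => dist_nonneg) (fun n => (hc1 n).le)
      tendsto_one_div_add_atTop_nhds_zero_nat
  choose w hw using fun n => phi_surjective hd (c n)
  set R : ℝ := ‖Phi z‖ + 2 with hR
  have hwball : ∀ n, w n ∈ closedBall (0 : Fin d → ℂ) R := by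
    intro n
    rw [mem_closedBall_zero_iff]
    refine (pi_norm_le_iff_of_nonneg (by positivity)).2 fun i => ?_
    calc ‖w n i‖ ≤ ‖Phi (w n)‖ + 1 := norm_le_of_Phi _ _
      _ = ‖c n‖ + 1 := by rw [hw n]
      _ ≤ ‖Phi z‖ + 2 := by
          have h1 : ‖c n‖ ≤ ‖Phi z‖ + dist (c n) (Phi z) := by
            have := norm_sub_norm_le (c n) (Phi z)
            rw [dist_eq_norm]
            linarith
          have h2 : dist (c n) (Phi z) ≤ 1 := le_trans (hc1 n).le (by
            rw [div_le_one (by positivity)]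
            linarith [Nat.cast_nonneg (α := ℝ) n])
          linarith
  obtain ⟨y, hy, φ, hφ, htend⟩ := (isCompact_closedBall (0 : Fin d → ℂ) R).tendsto_subseq hwball
  have hPhiy : Phi y = Phi z := by
    have h1 : Filter.Tendsto (fun n => Phi (w (φ n))) Filter.atTop (nhds (Phi y)) :=
      (continuous_Phi.tendsto y).comp htend
    have h2 : Filter.Tendsto (fun n => Phi (w (φ n))) Filter.atTop (nhds (Phi z)) := by
      simp_rw [hw]
      exact hctend.comp hφ.tendsto_atTop
    exact tendsto_nhds_unique h1 h2
  obtain ⟨σ, hσ⟩ := exists_perm_of_M_eq y z (M_eq_of_Phi_eq hPhiy)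
  have hyV : y ∈ V := by
    refine ⟨σ⁻¹, ?_⟩
    have hyz : (fun i => y (σ⁻¹ i)) = z := funext fun i => by
      rw [hσ (σ⁻¹ i)]
      simp
    rw [hyz]
    exact hzU
  obtain ⟨n, hn⟩ := (htend.eventually (hVopen.mem_nhds hyV)).exists
  exact hc2 (φ n) ⟨w (φ n), hn, hw (φ n)⟩

end EsymmAux

end

/-- The map `Φ = (φ₁, …, φ_d)` built from the elementary symmetric
polynomials is an open map on `ℂᵈ`; moreover, if `Ω` is a bounded domain invariant under all
permutations of the coordinates, then `Φ(Ω)` is open and `Φ : Ω → Φ(Ω)` is a holomorphic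
proper map. -/
theorem esymm_map_open_and_proper {d : ℕ} (hd : 1 ≤ d) :
    IsOpenMap (fun z : Fin d → ℂ =>
        fun k : Fin d => MvPolynomial.eval z (MvPolynomial.esymm (Fin d) ℂ ((k : ℕ) + 1))) ∧
      ∀ Ω : Set (Fin d → ℂ), IsOpen Ω → IsConnected Ω → Bornology.IsBounded Ω →
        (∀ σ : Equiv.Perm (Fin d), ∀ z ∈ Ω, (fun i => z (σ i)) ∈ Ω) →
        IsHolomorphicProperMapOn (fun z : Fin d → ℂ =>
          fun k : Fin d => MvPolynomial.eval z (MvPolynomial.esymm (Fin d) ℂ ((k : ℕ) + 1)))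
          Ω := by
  have hPhi : (fun z : Fin d → ℂ =>
      fun k : Fin d => MvPolynomial.eval z (MvPolynomial.esymm (Fin d) ℂ ((k : ℕ) + 1)))
      = EsymmAux.Phi (d := d) := rfl
  rw [hPhi]
  constructor
  · exact EsymmAux.isOpenMap_Phi hd
  · intro Ω hopen hconn hbdd hinv
    refine ⟨EsymmAux.analyticOnNhd_Phi Ω, EsymmAux.isOpenMap_Phi hd Ω hopen, ?_⟩
    intro K hK hKc
    have hclosed : IsClosed {z ∈ Ω | EsymmAux.Phi z ∈ K} := by
      refine isClosed_of_closure_subset fun x hx => ?_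
      have hxK : EsymmAux.Phi x ∈ K := by
        have hsub : {z ∈ Ω | EsymmAux.Phi z ∈ K} ⊆ EsymmAux.Phi ⁻¹' K := fun z hz => hz.2
        have hmem := closure_mono hsub hx
        rwa [IsClosed.closure_eq (hKc.isClosed.preimage EsymmAux.continuous_Phi)] at hmem
      obtain ⟨v, hvΩ, hv⟩ := hK hxK
      obtain ⟨σ, hσ⟩ := EsymmAux.exists_perm_of_M_eq x v (EsymmAux.M_eq_of_Phi_eq hv.symm)
      have hvσ : (fun i => v (σ i)) ∈ Ω := hinv σ v hvΩ
      have hxΩ : x ∈ Ω := by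
        rwa [show (fun i => v (σ i)) = x from funext fun i => (hσ i).symm] at hvσ
      exact ⟨hxΩ, hxK⟩
    exact Metric.isCompact_of_isClosed_isBounded hclosed
      (hbdd.subset (Set.sep_subset _ _))
end
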